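/- Let 0 < q < 1 and let s_1, ..., s_d, t_1, ..., t_d be complex numbers such that Re(t_j + t_{j+1} + ... + t_d) > 0 for every j = 1, ..., d. Then the series f_q(s_1,...,s_d; t_1,...,t_d) = Σ_{0 < k_1 < ... < k_d} q^{k_1 t_1 + ... + k_d t_d} / ([k_1]^{s_1} ... [k_d]^{s_d}) converges absolutely, where [k] = (1-q^k)/(1-q). -/

import Mathlib

open Finset

/-- The q-analog `[k] = (1-q^k)/(1-q)`. -/
noncomputable def qnum (q : ℝ) (k : ℕ) : ℝ := (1 - q ^ k) / (1 - q)

/-- products over pi types of powers are summable when all ratios are in `[0,1)`. -/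
lemma summable_pi_prod : ∀ (n : ℕ) (c : Fin n → ℝ), (∀ i, 0 ≤ c i) → (∀ i, c i < 1) →
    Summable (fun m : Fin n → ℕ => ∏ i, (c i) ^ (m i)) := by
  intro n
  induction n with
  | zero =>
    intro c _ _
    exact Summable.of_finite
  | succ n ih =>
    intro c h0 h1
    apply ((Fin.consEquiv (fun _ : Fin (n+1) => ℕ)).summable_iff).mp
    have hgeo : Summable (fun x : ℕ => (c 0) ^ x) := summable_geometric_of_lt_one (h0 0) (h1 0)
    have hg : Summable (fun m : Fin n → ℕ => ∏ i, (c i.succ) ^ (m i)) :=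
      ih (fun i => c i.succ) (fun i => h0 _) (fun i => h1 _)
    have hs : Summable (fun p : ℕ × (Fin n → ℕ) =>
        (c 0) ^ p.1 * ∏ i : Fin n, (c i.succ) ^ (p.2 i)) := by
      apply Summable.mul_of_nonneg hgeo hg
      · intro x; exact pow_nonneg (h0 0) x
      · intro m; exact Finset.prod_nonneg fun i _ => pow_nonneg (h0 _) _
    apply hs.congr
    intro p
    simp [Fin.consEquiv, Fin.prod_univ_succ]

def psum {d : ℕ} (m : Fin (d+1) → ℕ) (j : Fin (d+1)) : ℕ :=
  ∑ i ∈ Finset.univ.filter (fun i => i ≤ j), (m i + 1)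

def dsum {d : ℕ} (k : Fin (d+1) → ℕ) (j : Fin (d+1)) : ℕ :=
  k j - (Fin.cases 0 (fun i : Fin d => k i.castSucc) j) - 1

lemma psum_zero {d : ℕ} (m : Fin (d+1) → ℕ) : psum m 0 = m 0 + 1 := by
  unfold psum
  have : Finset.univ.filter (fun i => i ≤ (0 : Fin (d+1))) = {0} := by
    ext i
    simp only [Finset.mem_filter, Finset.mem_univ, true_and, Finset.mem_singleton, Fin.le_zero_iff]
  rw [this, Finset.sum_singleton]

lemma psum_succ {d : ℕ} (m : Fin (d+1) → ℕ) (i : Fin d) :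
    psum m i.succ = psum m i.castSucc + (m i.succ + 1) := by
  unfold psum
  have : Finset.univ.filter (fun a => a ≤ i.succ) =
      insert i.succ (Finset.univ.filter (fun a => a ≤ i.castSucc)) := by
    ext a
    simp only [Finset.mem_filter, Finset.mem_insert, Finset.mem_univ, true_and, Fin.le_def,
      Fin.ext_iff, Fin.val_succ, Fin.coe_castSucc]
    omega
  rw [this, Finset.sum_insert (by simp [Fin.le_def])]
  omega

lemma dsum_zero {d : ℕ} (k : Fin (d+1) → ℕ) : dsum k 0 = k 0 - 0 - 1 := by
  simp [dsum]

lemma dsum_succ {d : ℕ} (k : Fin (d+1) → ℕ) (i : Fin d) :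
    dsum k i.succ = k i.succ - k i.castSucc - 1 := by
  simp [dsum]

lemma psum_strictMono {d : ℕ} (m : Fin (d+1) → ℕ) : StrictMono (psum m) := by
  intro a b hab
  refine Finset.sum_lt_sum_of_subset ?_ (i := b) ?_ ?_ ?_ ?_
  · intro i hi
    simp only [Finset.mem_filter, Finset.mem_univ, true_and] at hi ⊢
    exact hi.trans hab.le
  · simp
  · simp [hab.not_ge]
  · omega
  · intro j _ _; omega

lemma psum_pos {d : ℕ} (m : Fin (d+1) → ℕ) (j : Fin (d+1)) : 0 < psum m j := by
  apply Finset.sum_pos (fun i _ => Nat.succ_pos _)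
  exact ⟨j, by simp⟩

lemma dsum_psum {d : ℕ} (m : Fin (d+1) → ℕ) (j : Fin (d+1)) : dsum (psum m) j = m j := by
  induction j using Fin.cases with
  | zero => rw [dsum_zero, psum_zero]; omega
  | succ i => rw [dsum_succ, psum_succ]; omega

lemma psum_dsum {d : ℕ} (k : Fin (d+1) → ℕ) (hk : StrictMono k) (hpos : ∀ j, 0 < k j)
    (j : Fin (d+1)) : psum (dsum k) j = k j := by
  induction j using Fin.induction with
  | zero =>
    rw [psum_zero, dsum_zero]
    have := hpos 0
    omega
  | succ i ih =>
    rw [psum_succ, dsum_succ, ih]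
    have hlt : k i.castSucc < k i.succ := hk (Fin.castSucc_lt_succ (i := i))
    omega

def tupleEquiv (d : ℕ) :
    (Fin (d+1) → ℕ) ≃ {k : Fin (d+1) → ℕ // StrictMono k ∧ ∀ j, 0 < k j} where
  toFun m := ⟨psum m, psum_strictMono m, psum_pos m⟩
  invFun k := dsum k.1
  left_inv m := funext fun j => dsum_psum m j
  right_inv k := Subtype.ext (funext fun j => psum_dsum k.1 k.2.1 k.2.2 j)

lemma rpow_finset_sum {x : ℝ} (hx : 0 < x) {ι : Type*} (s : Finset ι) (f : ι → ℝ) :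
    x ^ (∑ i ∈ s, f i) = ∏ i ∈ s, x ^ (f i) := by
  induction s using Finset.cons_induction with
  | empty => simp
  | cons a s ha ih => rw [Finset.sum_cons, Finset.prod_cons, Real.rpow_add hx, ih]

lemma exp_swap {d : ℕ} (m : Fin (d+1) → ℕ) (τ : Fin (d+1) → ℝ) :
    ∑ j, (psum m j : ℝ) * τ j =
      ∑ i, ((m i : ℝ) + 1) * (∑ j ∈ Finset.univ.filter (fun j => i ≤ j), τ j) := by
  have h1 : ∀ j, (psum m j : ℝ) = ∑ i ∈ Finset.univ.filter (fun i => i ≤ j), ((m i : ℝ) + 1) := by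
    intro j
    unfold psum
    push_cast
    rfl
  calc ∑ j, (psum m j : ℝ) * τ j
      = ∑ j, ∑ i, (if i ≤ j then ((m i : ℝ) + 1) * τ j else 0) := by
        refine Finset.sum_congr rfl fun j _ => ?_
        rw [h1, Finset.sum_mul, ← Finset.sum_filter]
    _ = ∑ i, ∑ j, (if i ≤ j then ((m i : ℝ) + 1) * τ j else 0) := Finset.sum_comm
    _ = ∑ i, ((m i : ℝ) + 1) * (∑ j ∈ Finset.univ.filter (fun j => i ≤ j), τ j) := by
        refine Finset.sum_congr rfl fun i _ => ?_
        rw [← Finset.sum_filter, Finset.mul_sum]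

theorem stmt_9 (q : ℝ) (hq0 : 0 < q) (hq1 : q < 1) (d : ℕ)
    (s t : Fin (d + 1) → ℂ)
    (ht : ∀ j, 0 < (∑ i ∈ Finset.univ.filter (fun i => j ≤ i), t i).re) :
    Summable (fun k : {k : Fin (d + 1) → ℕ // StrictMono k ∧ ∀ j, 0 < k j} =>
      (q : ℂ) ^ (∑ j, (k.1 j : ℂ) * t j) /
        ∏ j, (qnum q (k.1 j) : ℂ) ^ (s j)) := by
  have hq1' : 0 < 1 - q := by linarith
  set B : ℝ := (1 - q)⁻¹ with hBdef
  have hBpos : 0 < B := by positivity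
  have hB1 : 1 ≤ B := (one_le_inv₀ hq1').mpr (by linarith)
  have hqnum1 : ∀ k : ℕ, 0 < k → 1 ≤ qnum q k := by
    intro k hk
    rw [qnum, le_div_iff₀ hq1', one_mul]
    have h2 : q ^ k ≤ q := by
      simpa using pow_le_pow_of_le_one hq0.le hq1.le hk
    linarith
  have hqnum_pos : ∀ k : ℕ, 0 < k → 0 < qnum q k :=
    fun k hk => lt_of_lt_of_le one_pos (hqnum1 k hk)
  have hqnumB : ∀ k : ℕ, qnum q k ≤ B := by
    intro k
    rw [qnum, hBdef, inv_eq_one_div, div_le_div_iff_of_pos_right hq1']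
    nlinarith [pow_pos hq0 k]
  have key : ∀ (x a : ℝ), 1 ≤ x → x ≤ B → B ^ (-|a|) ≤ x ^ a := by
    intro x a hx hxB
    have hx0 : (0:ℝ) < x := lt_of_lt_of_le one_pos hx
    rcases le_or_gt 0 a with ha | ha
    · rw [abs_of_nonneg ha]
      calc B ^ (-a) ≤ 1 := Real.rpow_le_one_of_one_le_of_nonpos hB1 (by linarith)
        _ = (1:ℝ) ^ a := (Real.one_rpow a).symm
        _ ≤ x ^ a := Real.rpow_le_rpow zero_le_one hx ha
    · rw [abs_of_neg ha, neg_neg]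
      exact Real.rpow_le_rpow_of_nonpos hx0 hxB ha.le
  set τ : Fin (d+1) → ℝ := fun j => (t j).re with hτdef
  set T : Fin (d+1) → ℝ := fun i => ∑ j ∈ Finset.univ.filter (fun j => i ≤ j), τ j with hTdef
  have hTpos : ∀ i, 0 < T i := by
    intro i
    have h := ht i
    rw [Complex.re_sum] at h
    exact h
  set D : ℝ := ∏ j, B ^ |(s j).re| with hDdef
  have hDpos : 0 < D := Finset.prod_pos fun j _ => Real.rpow_pos_of_pos hBpos _
  apply Summable.of_norm
  have hle : ∀ k : {k : Fin (d + 1) → ℕ // StrictMono k ∧ ∀ j, 0 < k j},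
      ‖(q : ℂ) ^ (∑ j, (k.1 j : ℂ) * t j) / ∏ j, (qnum q (k.1 j) : ℂ) ^ (s j)‖
        ≤ D * q ^ (∑ j, (k.1 j : ℝ) * τ j) := by
    intro k
    rw [norm_div, norm_prod]
    have h1 : ‖(q:ℂ) ^ (∑ j, ((k.1 j : ℕ) : ℂ) * t j)‖ = q ^ (∑ j, (k.1 j : ℝ) * τ j) := by
      rw [Complex.norm_cpow_eq_rpow_re_of_pos hq0]
      congr 1
      rw [Complex.re_sum]
      refine Finset.sum_congr rfl fun j _ => ?_
      simp [Complex.mul_re, hτdef]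
    rw [h1]
    have h2 : ∀ j, ‖((qnum q (k.1 j) : ℝ) : ℂ) ^ (s j)‖ = (qnum q (k.1 j)) ^ (s j).re := by
      intro j
      rw [Complex.norm_cpow_eq_rpow_re_of_pos (hqnum_pos _ (k.2.2 j))]
    have h3 : D⁻¹ ≤ ∏ j, ‖((qnum q (k.1 j) : ℝ) : ℂ) ^ (s j)‖ := by
      rw [hDdef, ← Finset.prod_inv_distrib]
      apply Finset.prod_le_prod
      · intro j _
        positivity
      · intro j _
        rw [h2 j, ← Real.rpow_neg hBpos.le]
        exact key _ _ (hqnum1 _ (k.2.2 j)) (hqnumB _)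
    calc (q ^ (∑ j, (k.1 j : ℝ) * τ j)) / ∏ j, ‖((qnum q (k.1 j) : ℝ) : ℂ) ^ (s j)‖
        ≤ (q ^ (∑ j, (k.1 j : ℝ) * τ j)) / D⁻¹ :=
          div_le_div_of_nonneg_left (Real.rpow_nonneg hq0.le _) (by positivity) h3
      _ = D * q ^ (∑ j, (k.1 j : ℝ) * τ j) := by rw [div_eq_mul_inv, inv_inv, mul_comm]
  have hsum : Summable (fun k : {k : Fin (d + 1) → ℕ // StrictMono k ∧ ∀ j, 0 < k j} =>
      D * q ^ (∑ j, (k.1 j : ℝ) * τ j)) := by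
    apply ((tupleEquiv d).summable_iff).mp
    have base : Summable (fun m : Fin (d+1) → ℕ => ∏ i, (q ^ T i) ^ (m i)) :=
      summable_pi_prod _ _ (fun i => Real.rpow_nonneg hq0.le _)
        (fun i => Real.rpow_lt_one hq0.le hq1 (hTpos i))
    apply (base.mul_left (D * ∏ i, q ^ T i)).congr
    intro m
    show (D * ∏ i, q ^ T i) * ∏ i, (q ^ T i) ^ (m i)
        = D * q ^ (∑ j, (psum m j : ℝ) * τ j)
    rw [exp_swap m τ]
    have hTi : ∀ i : Fin (d+1), (∑ j ∈ Finset.univ.filter (fun j => i ≤ j), τ j) = T i :=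
      fun i => rfl
    simp only [hTi]
    rw [rpow_finset_sum hq0]
    have hfac : ∀ i : Fin (d+1), q ^ (((m i : ℝ) + 1) * T i) = (q ^ T i) ^ (m i) * q ^ T i := by
      intro i
      rw [mul_comm ((m i : ℝ) + 1), Real.rpow_mul hq0.le,
        show ((m i : ℝ) + 1) = ((m i + 1 : ℕ) : ℝ) by push_cast; ring,
        Real.rpow_natCast, pow_succ]
    calc (D * ∏ i, q ^ T i) * ∏ i, (q ^ T i) ^ (m i)
        = D * ∏ i, ((q ^ T i) ^ (m i) * q ^ T i) := by
          rw [Finset.prod_mul_distrib]; ring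
      _ = D * ∏ i, q ^ (((m i : ℝ) + 1) * T i) := by
          rw [Finset.prod_congr rfl fun i _ => (hfac i).symm]
      _ = D * ∏ i : Fin (d+1), q ^ (((m i : ℝ) + 1) * T i) := rfl
  exact Summable.of_nonneg_of_le (fun k => norm_nonneg _) hle hsum
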